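/- Let ω(x) = (2πσ₁²)⁻¹e^{−|x|²/(2σ₁²)} − κ(2πσ₂²)⁻¹e^{−|x|²/(2σ₂²)} on ℝ² with κ > 0, 0 < σ₁ < σ₂, and σ₁√κ < σ₂. Then ‖ω‖_{L¹(ℝ²)} = (1−κ) + 2(κ e^{−Θ²/(2σ₂²)} − e^{−Θ²/(2σ₁²)}), where Θ = σ₁σ₂ √( 2 log(σ₂²/(κσ₁²)) / (σ₂² − σ₁²) ). -/

import Mathlib

open MeasureTheory Set Filter
open scoped Real

noncomputable section

abbrev E2 := EuclideanSpace ℝ (Fin 2)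

lemma DoG_volume_unit_ball : (volume (Metric.ball (0:E2) 1)).toReal = π := by
  rw [EuclideanSpace.volume_ball]
  norm_num [Real.Gamma_two, Real.sq_sqrt Real.pi_pos.le]
  exact Real.pi_pos.le

lemma DoG_integral_Ioi (σ R : ℝ) (hσ : 0 < σ) :
    ∫ y in Set.Ioi R, y * Real.exp (-y^2/(2*σ^2)) = σ^2 * Real.exp (-R^2/(2*σ^2)) := by
  have hb : 0 < (2*σ^2)⁻¹ := by positivity
  have hd : ∀ y : ℝ, HasDerivAt (fun y : ℝ => -σ^2 * Real.exp (-y^2/(2*σ^2)))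
      (y * Real.exp (-y^2/(2*σ^2))) y := by
    intro y
    have h1 : HasDerivAt (fun y : ℝ => -y^2/(2*σ^2)) (-2*y/(2*σ^2)) y := by
      have := ((hasDerivAt_pow 2 y).neg).div_const (2*σ^2)
      simpa using this
    have := ((h1.exp).const_mul (-σ^2))
    refine this.congr_deriv ?_
    have hσ2 : σ^2 ≠ 0 := by positivity
    field_simp
  have hint : IntegrableOn (fun y : ℝ => y * Real.exp (-y^2/(2*σ^2))) (Set.Ioi R) := by
    have := (integrable_mul_exp_neg_mul_sq hb).integrableOn (s := Set.Ioi R)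
    refine this.congr_fun (fun y _ => ?_) measurableSet_Ioi
    congr 1
    ring
  have htend : Tendsto (fun y : ℝ => -σ^2 * Real.exp (-y^2/(2*σ^2))) atTop (nhds 0) := by
    have h0 : Tendsto (fun y:ℝ => y^2/(2*σ^2)) atTop atTop :=
      (tendsto_pow_atTop two_ne_zero).atTop_div_const (by positivity)
    have h1 : Tendsto (fun y : ℝ => -y^2/(2*σ^2)) atTop atBot := by
      simp only [neg_div]
      exact Filter.tendsto_neg_atTop_atBot.comp h0
    have h2 := (Real.tendsto_exp_atBot.comp h1).const_mul (-σ^2 : ℝ)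
    simpa using h2
  have := integral_Ioi_of_hasDerivAt_of_tendsto
    ((hd R).continuousAt.continuousWithinAt) (fun x _ => hd x) hint htend
  rw [this]; ring

lemma DoG_integrable (σ : ℝ) (hσ : 0 < σ) :
    Integrable (fun x : E2 => (2*π*σ^2)⁻¹ * Real.exp (-‖x‖^2/(2*σ^2))) := by
  have hb : (0:ℝ) < (2*σ^2)⁻¹ := by positivity
  have h := (GaussianFourier.integrable_cexp_neg_mul_sq_norm_add
    (V := E2) (b := ((2*σ^2)⁻¹ : ℝ)) (by rw [Complex.ofReal_re]; exact hb) 0 0).re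
  refine (h.congr ?_).const_mul _
  filter_upwards with x
  have hcast : (-(((2*σ^2)⁻¹ : ℝ)):ℂ) * (‖x‖:ℂ)^2 + 0 * ((inner ℝ (0:E2) x : ℝ):ℂ)
      = ((-‖x‖^2/(2*σ^2) : ℝ) : ℂ) := by push_cast; ring
  rw [hcast]; exact Complex.exp_ofReal_re _

lemma DoG_full (σ : ℝ) (hσ : 0 < σ) :
    ∫ x : E2, (2*π*σ^2)⁻¹ * Real.exp (-‖x‖^2/(2*σ^2)) = 1 := by
  have hb : (0:ℝ) < (2*σ^2)⁻¹ := by positivity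
  have h := GaussianFourier.integral_rexp_neg_mul_sq_norm (V := E2) hb
  rw [finrank_euclideanSpace_fin] at h
  have heq : ∀ x : E2, -‖x‖^2/(2*σ^2) = -(2*σ^2)⁻¹ * ‖x‖^2 := fun x => by ring
  simp_rw [heq, MeasureTheory.integral_const_mul, h]
  have : ((2:ℕ) / 2 : ℝ) = 1 := by norm_num
  rw [this, Real.rpow_one]
  have hπ := Real.pi_pos
  rw [div_inv_eq_mul]
  field_simp

lemma DoG_tail (σ R : ℝ) (hσ : 0 < σ) (hR : 0 ≤ R) :
    ∫ x : E2, Set.indicator {y : E2 | R < ‖y‖}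
      (fun y => (2*π*σ^2)⁻¹ * Real.exp (-‖y‖^2/(2*σ^2))) x
      = Real.exp (-R^2/(2*σ^2)) := by
  have h1 : ∀ x : E2, Set.indicator {y : E2 | R < ‖y‖}
      (fun y => (2*π*σ^2)⁻¹ * Real.exp (-‖y‖^2/(2*σ^2))) x
      = Set.indicator (Set.Ioi R) (fun r : ℝ => (2*π*σ^2)⁻¹ * Real.exp (-r^2/(2*σ^2))) ‖x‖ := by
    intro x
    by_cases h : R < ‖x‖ <;>
      simp [Set.indicator, h]
  simp_rw [h1]
  rw [integral_fun_norm_addHaar (volume : Measure E2)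
    (Set.indicator (Set.Ioi R) (fun r : ℝ => (2*π*σ^2)⁻¹ * Real.exp (-r^2/(2*σ^2))))]
  rw [measureReal_def, DoG_volume_unit_ball]
  have hdim : Module.finrank ℝ E2 = 2 := finrank_euclideanSpace_fin
  rw [hdim]
  have h2 : ∀ y : ℝ, y ^ (2-1) • Set.indicator (Set.Ioi R)
      (fun r : ℝ => (2*π*σ^2)⁻¹ * Real.exp (-r^2/(2*σ^2))) y
      = Set.indicator (Set.Ioi R) (fun r : ℝ => (2*π*σ^2)⁻¹ * (r * Real.exp (-r^2/(2*σ^2)))) y := by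
    intro y
    by_cases h : y ∈ Set.Ioi R <;> simp [Set.indicator, h] <;> ring
  simp_rw [h2]
  rw [integral_indicator measurableSet_Ioi,
    Measure.restrict_restrict measurableSet_Ioi, Set.Ioi_inter_Ioi, max_eq_left hR,
    MeasureTheory.integral_const_mul, DoG_integral_Ioi σ R hσ]
  simp only [smul_eq_mul, nsmul_eq_mul, Nat.cast_ofNat]
  field_simp

lemma DoG_sign (κ σ1 σ2 : ℝ) (hκ : 0 < κ) (h1 : 0 < σ1) (h12 : σ1 < σ2)
    (hbal : σ1 * Real.sqrt κ < σ2) (r : ℝ) (hr : 0 ≤ r) :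
    κ * ((2*π*σ2^2)⁻¹ * Real.exp (-r^2/(2*σ2^2))) ≤ (2*π*σ1^2)⁻¹ * Real.exp (-r^2/(2*σ1^2))
    ↔ r ≤ σ1 * σ2 * Real.sqrt (2 * Real.log (σ2 ^ 2 / (κ * σ1 ^ 2)) / (σ2 ^ 2 - σ1 ^ 2)) := by
  have h2 : 0 < σ2 := h1.trans h12
  have hπ := Real.pi_pos
  set L := Real.log (σ2 ^ 2 / (κ * σ1 ^ 2)) with hLdef
  have hκσ : κ * σ1^2 < σ2^2 := by
    have h := pow_lt_pow_left₀ hbal (by positivity : (0:ℝ) ≤ σ1 * Real.sqrt κ) two_ne_zero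
    rw [mul_pow, Real.sq_sqrt hκ.le] at h
    nlinarith
  have hL : 0 < L := Real.log_pos ((one_lt_div (by positivity)).mpr hκσ)
  have hs : 0 < σ2^2 - σ1^2 := by nlinarith
  set Θ := σ1 * σ2 * Real.sqrt (2 * L / (σ2 ^ 2 - σ1 ^ 2)) with hΘdef
  have hΘ0 : 0 ≤ Θ := by positivity
  have hΘsq : Θ^2 = 2*σ1^2*σ2^2*L/(σ2^2-σ1^2) := by
    rw [hΘdef, mul_pow, mul_pow, Real.sq_sqrt (div_nonneg (by linarith) hs.le)]
    ring
  rw [← pow_le_pow_iff_left₀ hr hΘ0 two_ne_zero, hΘsq, le_div_iff₀ hs]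
  rw [← Real.log_le_log_iff (by positivity) (by positivity),
    Real.log_mul hκ.ne'
      (by positivity : (0:ℝ) < (2*π*σ2^2)⁻¹ * Real.exp (-r^2/(2*σ2^2))).ne',
    Real.log_mul (by positivity : (0:ℝ) < (2*π*σ2^2)⁻¹).ne' (Real.exp_pos _).ne',
    Real.log_mul (by positivity : (0:ℝ) < (2*π*σ1^2)⁻¹).ne' (Real.exp_pos _).ne',
    Real.log_exp, Real.log_exp, Real.log_inv, Real.log_inv]
  have hlog : Real.log (2*π*σ2^2) - Real.log (2*π*σ1^2) - Real.log κ = L := by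
    rw [hLdef, Real.log_div (by positivity : (0:ℝ) < σ2^2).ne'
        (by positivity : (0:ℝ) < κ*σ1^2).ne',
      Real.log_mul hκ.ne' (by positivity : (0:ℝ) < σ1^2).ne',
      Real.log_mul (by positivity : (0:ℝ) < 2*π).ne' (by positivity : (0:ℝ) < σ2^2).ne',
      Real.log_mul (by positivity : (0:ℝ) < 2*π).ne' (by positivity : (0:ℝ) < σ1^2).ne']
    ring
  rw [show -r^2/(2*σ1^2) = -(r^2/(2*σ1^2)) from neg_div _ _,
    show -r^2/(2*σ2^2) = -(r^2/(2*σ2^2)) from neg_div _ _]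
  have heq : r^2/(2*σ1^2) - r^2/(2*σ2^2) = r^2*(σ2^2-σ1^2)/(2*σ1^2*σ2^2) := by
    field_simp
  constructor
  · intro h
    have h' : r^2*(σ2^2-σ1^2)/(2*σ1^2*σ2^2) ≤ L := by rw [← heq]; linarith
    have h'' := (div_le_iff₀ (by positivity : (0:ℝ) < 2*σ1^2*σ2^2)).mp h'
    nlinarith
  · intro h
    have h' : r^2*(σ2^2-σ1^2)/(2*σ1^2*σ2^2) ≤ L := by
      rw [div_le_iff₀ (by positivity : (0:ℝ) < 2*σ1^2*σ2^2)]
      nlinarith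
    rw [← heq] at h'
    linarith


/-- The `L¹(ℝ²)` norm of the DoG kernel
`ω(x) = (2πσ₁²)⁻¹e^{−|x|²/(2σ₁²)} − κ(2πσ₂²)⁻¹e^{−|x|²/(2σ₂²)}` (with `κ > 0`,
`0 < σ₁ < σ₂`, `σ₁√κ < σ₂`) equals
`(1−κ) + 2(κ e^{−Θ²/(2σ₂²)} − e^{−Θ²/(2σ₁²)})` with
`Θ = σ₁σ₂√(2 log(σ₂²/(κσ₁²))/(σ₂²−σ₁²))`. -/
theorem L1_norm_DoG (κ σ1 σ2 : ℝ) (hκ : 0 < κ) (h1 : 0 < σ1) (h12 : σ1 < σ2)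
    (hbal : σ1 * Real.sqrt κ < σ2) :
    let ω : EuclideanSpace ℝ (Fin 2) → ℝ := fun x =>
      (2 * π * σ1 ^ 2)⁻¹ * Real.exp (-‖x‖ ^ 2 / (2 * σ1 ^ 2))
        - κ * (2 * π * σ2 ^ 2)⁻¹ * Real.exp (-‖x‖ ^ 2 / (2 * σ2 ^ 2))
    let Θ : ℝ := σ1 * σ2 * Real.sqrt (2 * Real.log (σ2 ^ 2 / (κ * σ1 ^ 2)) / (σ2 ^ 2 - σ1 ^ 2))
    (∫ x, |ω x|) = (1 - κ)
      + 2 * (κ * Real.exp (-Θ ^ 2 / (2 * σ2 ^ 2)) - Real.exp (-Θ ^ 2 / (2 * σ1 ^ 2))) := by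
  intro ω Θ
  have h2 : 0 < σ2 := h1.trans h12
  have hΘ0 : 0 ≤ Θ := by positivity
  set g1 : E2 → ℝ := fun x => (2*π*σ1^2)⁻¹ * Real.exp (-‖x‖^2/(2*σ1^2)) with hg1def
  set g2 : E2 → ℝ := fun x => (2*π*σ2^2)⁻¹ * Real.exp (-‖x‖^2/(2*σ2^2)) with hg2def
  have hω : ∀ x, ω x = g1 x - κ * g2 x := by
    intro x
    show _ - κ * (2*π*σ2^2)⁻¹ * Real.exp (-‖x‖^2/(2*σ2^2)) = _
    rw [hg1def, hg2def]
    ring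
  set S : Set E2 := {y : E2 | Θ < ‖y‖} with hSdef
  have hSm : MeasurableSet S := measurableSet_lt measurable_const measurable_norm
  have hg1i : Integrable g1 := DoG_integrable σ1 h1
  have hg2i : Integrable g2 := DoG_integrable σ2 h2
  have hIω : Integrable ω := by
    apply (hg1i.sub (hg2i.const_mul κ)).congr
    filter_upwards with x
    rw [hω x, Pi.sub_apply]
  have hIind : Integrable (S.indicator (fun y => κ * g2 y - g1 y)) :=
    ((hg2i.const_mul κ).sub hg1i).indicator hSm
  have hpt : ∀ x, |ω x| = ω x + 2 * S.indicator (fun y => κ * g2 y - g1 y) x := by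
    intro x
    have hiff := DoG_sign κ σ1 σ2 hκ h1 h12 hbal ‖x‖ (norm_nonneg x)
    by_cases h : Θ < ‖x‖
    · rw [Set.indicator_of_mem (show x ∈ S from h)]
      have hgt : ¬ (κ * ((2*π*σ2^2)⁻¹ * Real.exp (-‖x‖^2/(2*σ2^2)))
          ≤ (2*π*σ1^2)⁻¹ * Real.exp (-‖x‖^2/(2*σ1^2))) := fun hc =>
        absurd (hiff.mp hc) (not_le.mpr h)
      have hlt := lt_of_not_ge hgt
      have hneg : ω x ≤ 0 := by
        rw [hω x, hg1def, hg2def]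
        simp only []
        nlinarith [hlt]
      rw [abs_of_nonpos hneg, hω x]
      ring
    · rw [Set.indicator_of_notMem (show x ∉ S from h)]
      have hle : κ * ((2*π*σ2^2)⁻¹ * Real.exp (-‖x‖^2/(2*σ2^2)))
          ≤ (2*π*σ1^2)⁻¹ * Real.exp (-‖x‖^2/(2*σ1^2)) := hiff.mpr (le_of_not_gt h)
      have hpos : 0 ≤ ω x := by
        rw [hω x, hg1def, hg2def]
        simp only []
        nlinarith [hle]
      rw [abs_of_nonneg hpos, hω x]
      ring
  have t1 : ∫ x : EuclideanSpace ℝ (Fin 2), S.indicator g1 x = Real.exp (-Θ^2/(2*σ1^2)) := DoG_tail σ1 Θ h1 hΘ0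
  have t2 : ∫ x : EuclideanSpace ℝ (Fin 2), S.indicator g2 x = Real.exp (-Θ^2/(2*σ2^2)) := DoG_tail σ2 Θ h2 hΘ0
  have f1 : ∫ x : EuclideanSpace ℝ (Fin 2), g1 x = 1 := DoG_full σ1 h1
  have f2 : ∫ x : EuclideanSpace ℝ (Fin 2), g2 x = 1 := DoG_full σ2 h2
  have hindsplit : ∀ x, S.indicator (fun y => κ * g2 y - g1 y) x
      = κ * S.indicator g2 x - S.indicator g1 x := by
    intro x
    by_cases h : x ∈ S <;> simp [Set.indicator, h]
  calc ∫ x, |ω x|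
      = ∫ x, (ω x + 2 * S.indicator (fun y => κ * g2 y - g1 y) x) := by
        simp_rw [hpt]
    _ = (∫ x, ω x) + 2 * ∫ x, S.indicator (fun y => κ * g2 y - g1 y) x := by
        rw [integral_add hIω (hIind.const_mul 2), MeasureTheory.integral_const_mul]
    _ = (1 - κ) + 2 * (κ * Real.exp (-Θ^2/(2*σ2^2)) - Real.exp (-Θ^2/(2*σ1^2))) := by
        have hA : ∫ x, ω x = 1 - κ := by
          have : ∫ x, ω x = ∫ x, (g1 x - κ * g2 x) := by simp_rw [hω]
          rw [this, integral_sub hg1i (hg2i.const_mul κ),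
            MeasureTheory.integral_const_mul κ g2, f1, f2]
          ring
        have hB : ∫ x, S.indicator (fun y => κ * g2 y - g1 y) x
            = κ * Real.exp (-Θ^2/(2*σ2^2)) - Real.exp (-Θ^2/(2*σ1^2)) := by
          simp_rw [hindsplit]
          rw [integral_sub ((hg2i.indicator hSm).const_mul κ) (hg1i.indicator hSm),
            MeasureTheory.integral_const_mul κ (S.indicator g2), t1, t2]
        rw [hA, hB]
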